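/- Let u ∈ ℝ^m be a column vector, let Q ∈ ℝ^{m×m} be skew-symmetric (Qᵀ = −Q), and set C = u uᵀ + Q. Then for any matrix X ∈ ℝ^{m×m}, one has X C Xᵀ = C if and only if (Xu = u or Xu = −u) and X Q Xᵀ = Q. -/

import Mathlib

open Matrix

lemma aux_conj_vecMulVec (m : ℕ) (X : Matrix (Fin m) (Fin m) ℝ) (u : Fin m → ℝ) :
    X * Matrix.vecMulVec u u * Xᵀ = Matrix.vecMulVec (X.mulVec u) (X.mulVec u) := by
  rw [vecMulVec_eq Unit, vecMulVec_eq Unit, replicateCol_mulVec, ← vecMul_transpose, replicateRow_vecMul]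
  simp [Matrix.mul_assoc]

lemma aux_vecMulVec_symm (m : ℕ) (u : Fin m → ℝ) :
    (Matrix.vecMulVec u u)ᵀ = Matrix.vecMulVec u u := by
  ext i j
  simp [vecMulVec_apply, mul_comm]

lemma aux_vecMulVec_self_inj (m : ℕ) (u v : Fin m → ℝ)
    (h : Matrix.vecMulVec v v = Matrix.vecMulVec u u) : v = u ∨ v = -u := by
  by_cases hu : u = 0
  · left
    subst hu
    funext i
    have := congrFun (congrFun h i) i
    simp [vecMulVec_apply] at this
    simpa using this
  · obtain ⟨i, hi⟩ := Function.ne_iff.mp hu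
    have hii := congrFun (congrFun h i) i
    simp only [vecMulVec_apply] at hii
    have hvi : v i = u i ∨ v i = -(u i) := mul_self_eq_mul_self_iff.mp hii
    rcases hvi with hvi | hvi
    · left
      funext j
      have hij := congrFun (congrFun h i) j
      simp only [vecMulVec_apply, hvi] at hij
      exact mul_left_cancel₀ (by simpa using hi) hij
    · right
      funext j
      have hij := congrFun (congrFun h i) j
      simp only [vecMulVec_apply, hvi] at hij
      have : -(u i) * v j = -(u i) * (- u j) := by rw [hij]; ring
      have := mul_left_cancel₀ (by simpa using hi) this
      simpa using this

/-- For `C = u uᵀ + Q` with `Q` skew-symmetric, a matrix `X` satisfies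
`X C Xᵀ = C` if and only if `Xu = ±u` and `X Q Xᵀ = Q`. -/
theorem congruence_stabilizer_of_core_matrix (m : ℕ) (u : Fin m → ℝ)
    (Q : Matrix (Fin m) (Fin m) ℝ) (hQ : Qᵀ = -Q)
    (X : Matrix (Fin m) (Fin m) ℝ) :
    X * (Matrix.vecMulVec u u + Q) * Xᵀ = Matrix.vecMulVec u u + Q ↔
      ((X.mulVec u = u ∨ X.mulVec u = -u) ∧ X * Q * Xᵀ = Q) := by
  have key : X * (Matrix.vecMulVec u u + Q) * Xᵀ
      = Matrix.vecMulVec (X.mulVec u) (X.mulVec u) + X * Q * Xᵀ := by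
    rw [Matrix.mul_add, Matrix.add_mul, aux_conj_vecMulVec]
  constructor
  · intro h
    -- take transpose to separate symmetric and skew parts
    have ht := congrArg Matrix.transpose h
    simp only [Matrix.transpose_mul, Matrix.transpose_transpose, Matrix.transpose_add,
      hQ, aux_vecMulVec_symm, ← Matrix.mul_assoc] at ht
    -- ht : X * (uuᵀ + (-Q)) * Xᵀ = uuᵀ + (-Q)
    have key' : X * (Matrix.vecMulVec u u + -Q) * Xᵀ
        = Matrix.vecMulVec (X.mulVec u) (X.mulVec u) + -(X * Q * Xᵀ) := by
      rw [Matrix.mul_add, Matrix.add_mul, aux_conj_vecMulVec, Matrix.mul_neg,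
        Matrix.neg_mul]
    rw [key] at h
    rw [key'] at ht
    have hsym : Matrix.vecMulVec (X.mulVec u) (X.mulVec u) = Matrix.vecMulVec u u := by
      have := congrArg₂ (· + ·) h ht
      have h2 : (2 : ℝ) • Matrix.vecMulVec (X.mulVec u) (X.mulVec u)
          = (2 : ℝ) • Matrix.vecMulVec u u := by
        rw [two_smul, two_smul]
        linear_combination (norm := abel_nf) this
      exact smul_right_injective _ (by norm_num : (2:ℝ) ≠ 0) h2
    have hskew : X * Q * Xᵀ = Q := by
      have := congrArg₂ (· - ·) h ht
      have h2 : (2 : ℝ) • (X * Q * Xᵀ) = (2 : ℝ) • Q := by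
        rw [two_smul, two_smul]
        linear_combination (norm := abel_nf) this
      exact smul_right_injective _ (by norm_num : (2:ℝ) ≠ 0) h2
    exact ⟨aux_vecMulVec_self_inj m u (X.mulVec u) hsym, hskew⟩
  · rintro ⟨hu | hu, hq⟩ <;> rw [key, hq, hu]
    · congr 1
      ext i j
      simp [vecMulVec_apply]
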